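/- Let t > 0, −π/3 < θ < π/3 and (θ, t) ≠ (0, 1). There is no decomposition ρ₀(θ,t) = Σ_{i=1}^{n₁} t_{1i}|z₁(1, β_{1i}, γ_{1i})⟩⟨z₁(1, β_{1i}, γ_{1i})| + Σ_{k=2}^{4} Σ_{i=1}^{n_k} (t_{ki}/t²)|z_k(β_{ki})⟩⟨z_k(β_{ki})| with all t_{ki} > 0, all β_{ki}, γ_{1i} of modulus one, and n₁ = 3, n₂ = n₃ = n₄ = 2. Consequently every such decomposition satisfies n₁ + n₂ + n₃ + n₄ ≥ 10. -/

import Mathlib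

open Complex Matrix BigOperators

/-- The tensor (Kronecker) product of two vectors in `ℂ³`, as a vector in `ℂ⁹`:
the component `ξ_i η_j` sits at index `3i + j` (0-based). -/
def kron (ξ η : Fin 3 → ℂ) : Fin 9 → ℂ :=
  fun k => ξ ⟨k.val / 3, by have := k.isLt; omega⟩ * η ⟨k.val % 3, by have := k.isLt; omega⟩

/-- `z₁(a₁,a₂,a₃) = (a₁,a₂,a₃) ⊗ (ā₁,ā₂,ā₃)`. -/
noncomputable def z1 (a₁ a₂ a₃ : ℂ) : Fin 9 → ℂ :=
  kron ![a₁, a₂, a₃] ![starRingEnd ℂ a₁, starRingEnd ℂ a₂, starRingEnd ℂ a₃]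

/-- `z₂(β) = (0, √t β, 1) ⊗ (0, √t β̄, t e^{iθ})`. -/
noncomputable def z2 (t θ : ℝ) (β : ℂ) : Fin 9 → ℂ :=
  kron ![0, (Real.sqrt t : ℂ) * β, 1]
       ![0, (Real.sqrt t : ℂ) * starRingEnd ℂ β, (t : ℂ) * exp (θ * I)]

/-- `z₃(β) = (1, 0, √t β) ⊗ (t e^{iθ}, 0, √t β̄)`. -/
noncomputable def z3 (t θ : ℝ) (β : ℂ) : Fin 9 → ℂ :=
  kron ![1, 0, (Real.sqrt t : ℂ) * β]
       ![(t : ℂ) * exp (θ * I), 0, (Real.sqrt t : ℂ) * starRingEnd ℂ β]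

/-- `z₄(β) = (√t β, 1, 0) ⊗ (√t β̄, t e^{iθ}, 0)`. -/
noncomputable def z4 (t θ : ℝ) (β : ℂ) : Fin 9 → ℂ :=
  kron ![(Real.sqrt t : ℂ) * β, 1, 0]
       ![(Real.sqrt t : ℂ) * starRingEnd ℂ β, (t : ℂ) * exp (θ * I), 0]

/-- The pure (unnormalized) state `|z⟩⟨z|`. -/
noncomputable def rank1 (v : Fin 9 → ℂ) : Matrix (Fin 9) (Fin 9) ℂ :=
  vecMulVec v (star v)

/-- The separable state `ρ₀(θ,t)`. -/
noncomputable def rho0 (θ t : ℝ) : Matrix (Fin 9) (Fin 9) ℂ :=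
  !![3, 0, 0, 0, 1 + exp (-θ * I), 0, 0, 0, 1 + exp (θ * I);
     0, 1 + (t : ℂ), 0, 0, 0, 0, 0, 0, 0;
     0, 0, 1 + 1 / (t : ℂ), 0, 0, 0, 0, 0, 0;
     0, 0, 0, 1 + 1 / (t : ℂ), 0, 0, 0, 0, 0;
     1 + exp (θ * I), 0, 0, 0, 3, 0, 0, 0, 1 + exp (-θ * I);
     0, 0, 0, 0, 0, 1 + (t : ℂ), 0, 0, 0;
     0, 0, 0, 0, 0, 0, 1 + (t : ℂ), 0, 0;
     0, 0, 0, 0, 0, 0, 0, 1 + 1 / (t : ℂ), 0;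
     1 + exp (-θ * I), 0, 0, 0, 1 + exp (θ * I), 0, 0, 0, 3]

section Auxiliary

open Finset

variable {t θ : ℝ} {b c : ℂ}

-- component values of the product vectors
private lemma z1c0 : z1 1 b c 0 = 1 := by
  rw [show z1 1 b c 0 = 1 * starRingEnd ℂ 1 from rfl]; simp
private lemma z1c1 : z1 1 b c 1 = starRingEnd ℂ b := by
  rw [show z1 1 b c 1 = 1 * starRingEnd ℂ b from rfl]; simp
private lemma z1c2 : z1 1 b c 2 = starRingEnd ℂ c := by
  rw [show z1 1 b c 2 = 1 * starRingEnd ℂ c from rfl]; simp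
private lemma z1c3 : z1 1 b c 3 = b := by
  rw [show z1 1 b c 3 = b * starRingEnd ℂ 1 from rfl]; simp
private lemma z1c4 : z1 1 b c 4 = b * starRingEnd ℂ b := rfl
private lemma z1c5 : z1 1 b c 5 = b * starRingEnd ℂ c := rfl
private lemma z1c6 : z1 1 b c 6 = c := by
  rw [show z1 1 b c 6 = c * starRingEnd ℂ 1 from rfl]; simp
private lemma z1c8 : z1 1 b c 8 = c * starRingEnd ℂ c := rfl

private lemma z2c0 : z2 t θ b 0 = 0 := by
  rw [show z2 t θ b 0 = 0 * (0:ℂ) from rfl]; simp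
private lemma z2c1 : z2 t θ b 1 = 0 := zero_mul _
private lemma z2c2 : z2 t θ b 2 = 0 := zero_mul _
private lemma z2c3 : z2 t θ b 3 = 0 := mul_zero _
private lemma z2c4 : z2 t θ b 4 = ((Real.sqrt t : ℂ) * b) * ((Real.sqrt t : ℂ) * starRingEnd ℂ b) := rfl
private lemma z2c5 : z2 t θ b 5 = ((Real.sqrt t : ℂ) * b) * ((t : ℂ) * Complex.exp (θ * Complex.I)) := rfl
private lemma z2c6 : z2 t θ b 6 = 0 := mul_zero _

private lemma z3c0 : z3 t θ b 0 = (t : ℂ) * Complex.exp (θ * Complex.I) := one_mul _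
private lemma z3c1 : z3 t θ b 1 = 0 := mul_zero _
private lemma z3c2 : z3 t θ b 2 = (Real.sqrt t : ℂ) * starRingEnd ℂ b := one_mul _
private lemma z3c3 : z3 t θ b 3 = 0 := zero_mul _
private lemma z3c4 : z3 t θ b 4 = 0 := zero_mul _
private lemma z3c5 : z3 t θ b 5 = 0 := zero_mul _
private lemma z3c6 : z3 t θ b 6 = ((Real.sqrt t : ℂ) * b) * ((t : ℂ) * Complex.exp (θ * Complex.I)) := rfl

private lemma z4c0 : z4 t θ b 0 = ((Real.sqrt t : ℂ) * b) * ((Real.sqrt t : ℂ) * starRingEnd ℂ b) := rfl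
private lemma z4c1 : z4 t θ b 1 = ((Real.sqrt t : ℂ) * b) * ((t : ℂ) * Complex.exp (θ * Complex.I)) := rfl
private lemma z4c2 : z4 t θ b 2 = 0 := mul_zero _
private lemma z4c3 : z4 t θ b 3 = (Real.sqrt t : ℂ) * starRingEnd ℂ b := one_mul _
private lemma z4c5 : z4 t θ b 5 = 0 := mul_zero _
private lemma z4c6 : z4 t θ b 6 = 0 := zero_mul _
private lemma z4c8 : z4 t θ b 8 = 0 := zero_mul _

private lemma unit_of_abs {z : ℂ} (h : ‖z‖ = 1) : z * starRingEnd ℂ z = 1 := by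
  rw [Complex.mul_conj, Complex.normSq_eq_norm_sq, h]; norm_num

private lemma exp_unit (θ : ℝ) :
    Complex.exp (θ * Complex.I) * starRingEnd ℂ (Complex.exp (θ * Complex.I)) = 1 :=
  unit_of_abs (Complex.norm_exp_ofReal_mul_I θ)

private lemma sqrt_sq' {t : ℝ} (ht : 0 ≤ t) :
    ((Real.sqrt t : ℝ) : ℂ) * ((Real.sqrt t : ℝ) : ℂ) = (t : ℂ) := by
  rw [← Complex.ofReal_mul, Real.mul_self_sqrt ht]

private lemma divCancel9 {x P R : ℂ} (hx : x ≠ 0) (w : ℂ) (h : P = x * R) :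
    w / x * P = w * R := by
  rw [h, div_eq_mul_inv, show w * x⁻¹ * (x * R) = w * R * (x⁻¹ * x) from by ring,
    inv_mul_cancel₀ hx, mul_one]

/-- conjugating a zero moment equation -/
private lemma sum_conj_zero {n : ℕ} {w : Fin n → ℝ} {x : Fin n → ℂ}
    (h : ∑ i, (w i : ℂ) * starRingEnd ℂ (x i) = 0) : ∑ i, (w i : ℂ) * x i = 0 := by
  have h2 := congrArg (starRingEnd ℂ) h
  simpa [map_sum, _root_.map_mul, Complex.conj_ofReal, Complex.conj_conj] using h2

private lemma sum_conj_zero' {n : ℕ} {w : Fin n → ℝ} {x : Fin n → ℂ}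
    (h : ∑ i, (w i : ℂ) * x i = 0) : ∑ i, (w i : ℂ) * starRingEnd ℂ (x i) = 0 := by
  have h2 := congrArg (starRingEnd ℂ) h
  simpa [map_sum, _root_.map_mul, Complex.conj_ofReal] using h2

/-- two positive-weighted unit vectors summing to zero: equal weights, opposite phases -/
private lemma pair_cancel {w0 w1 : ℝ} (hw0 : 0 < w0) (hw1 : 0 < w1) {b0 b1 : ℂ}
    (hb0 : ‖b0‖ = 1) (hb1 : ‖b1‖ = 1)
    (h : (w0 : ℂ) * b0 + (w1 : ℂ) * b1 = 0) : w1 = w0 ∧ b1 = -b0 := by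
  have h' : (w1 : ℂ) * b1 = -((w0 : ℂ) * b0) := by linear_combination h
  have habs : w1 = w0 := by
    have h2 := congrArg (fun z : ℂ => ‖z‖) h'
    simpa [norm_mul, Complex.norm_real, Real.norm_eq_abs, hb0, hb1, abs_of_pos hw0, abs_of_pos hw1] using h2
  refine ⟨habs, ?_⟩
  have hcast : ((w1 : ℝ) : ℂ) = ((w0 : ℝ) : ℂ) := by exact_mod_cast habs
  have hw0C : ((w0 : ℝ) : ℂ) ≠ 0 := Complex.ofReal_ne_zero.mpr hw0.ne'
  have h3 : (w0 : ℂ) * b1 = (w0 : ℂ) * (-b0) := by linear_combination h' - b1 * hcast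
  exact mul_left_cancel₀ hw0C h3

/-- equality case in the triangle inequality for convex combinations of unit vectors -/
private lemma all_eq_of_abs_one {n : ℕ} (w : Fin n → ℝ) (x : Fin n → ℂ) (hw : ∀ i, 0 < w i)
    (hx : ∀ i, ‖x i‖ = 1) (hsum : ∑ i, (w i : ℂ) = 1)
    (habs : ‖∑ j, (w j : ℂ) * x j‖ = 1) :
    ∀ i, x i = ∑ j, (w j : ℂ) * x j := by
  intro i
  set c : ℂ := ∑ j, (w j : ℂ) * x j with hc
  have hwsum : ∑ j, w j = 1 := by
    have h0 : ((∑ j, w j : ℝ) : ℂ) = 1 := by push_cast; exact hsum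
    exact_mod_cast h0
  have hre : ∀ j, (starRingEnd ℂ c * x j).re ≤ 1 := by
    intro j
    refine (Complex.re_le_norm _).trans ?_
    rw [norm_mul, Complex.norm_conj, habs, hx j, one_mul]
  have hsum1 : ∑ j, w j * (starRingEnd ℂ c * x j).re = 1 := by
    have h2 : (starRingEnd ℂ c * c).re = 1 := by
      rw [mul_comm, Complex.mul_conj, Complex.normSq_eq_norm_sq, habs]
      norm_num
    calc ∑ j, w j * (starRingEnd ℂ c * x j).re
        = ∑ j, (starRingEnd ℂ c * ((w j : ℂ) * x j)).re := by
          refine Finset.sum_congr rfl fun j _ => ?_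
          rw [show starRingEnd ℂ c * ((w j : ℂ) * x j)
              = (w j : ℂ) * (starRingEnd ℂ c * x j) from by ring, Complex.re_ofReal_mul]
      _ = (starRingEnd ℂ c * ∑ j, (w j : ℂ) * x j).re := by
          rw [← Complex.re_sum, ← Finset.mul_sum]
      _ = 1 := by rw [← hc]; exact h2
  have hall : ∀ j, (starRingEnd ℂ c * x j).re = 1 := by
    by_contra hcon
    push_neg at hcon
    obtain ⟨j0, hj0⟩ := hcon
    have hlt : ∑ j, w j * (starRingEnd ℂ c * x j).re < ∑ j, w j * 1 := by
      refine Finset.sum_lt_sum (fun j _ => mul_le_mul_of_nonneg_left (hre j) (hw j).le)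
        ⟨j0, Finset.mem_univ j0, ?_⟩
      exact mul_lt_mul_of_pos_left (lt_of_le_of_ne (hre j0) hj0) (hw j0)
    rw [hsum1] at hlt
    simp only [mul_one] at hlt
    rw [hwsum] at hlt
    exact lt_irrefl 1 hlt
  have habs' : ‖starRingEnd ℂ c * x i‖ = 1 := by
    rw [norm_mul, Complex.norm_conj, habs, hx i, one_mul]
  have hns : (starRingEnd ℂ c * x i).re ^ 2 + (starRingEnd ℂ c * x i).im ^ 2 = 1 := by
    calc (starRingEnd ℂ c * x i).re ^ 2 + (starRingEnd ℂ c * x i).im ^ 2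
        = Complex.normSq (starRingEnd ℂ c * x i) := by rw [Complex.normSq_apply]; ring
      _ = 1 := by rw [Complex.normSq_eq_norm_sq, habs']; norm_num
  have him : (starRingEnd ℂ c * x i).im = 0 := by nlinarith [hall i]
  have hone : starRingEnd ℂ c * x i = 1 := by
    apply Complex.ext
    · rw [hall i]; simp
    · rw [him]; simp
  have hcc : c * starRingEnd ℂ c = 1 := unit_of_abs habs
  calc x i = (c * starRingEnd ℂ c) * x i := by rw [hcc, one_mul]
    _ = c * (starRingEnd ℂ c * x i) := by ring
    _ = c := by rw [hone, mul_one]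

end Auxiliary

set_option maxHeartbeats 1000000 in
private lemma master (t θ : ℝ) (ht : 0 < t) {n₁ n₂ n₃ n₄ : ℕ}
    (t1 : Fin n₁ → ℝ) (β1 γ1 : Fin n₁ → ℂ)
    (t2 : Fin n₂ → ℝ) (β2 : Fin n₂ → ℂ)
    (t3 : Fin n₃ → ℝ) (β3 : Fin n₃ → ℂ)
    (t4 : Fin n₄ → ℝ) (β4 : Fin n₄ → ℂ)
    (hp1 : ∀ i, 0 < t1 i) (hp2 : ∀ i, 0 < t2 i) (hp3 : ∀ i, 0 < t3 i) (hp4 : ∀ i, 0 < t4 i)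
    (hb1 : ∀ i, ‖β1 i‖ = 1) (hg1 : ∀ i, ‖γ1 i‖ = 1)
    (hb2 : ∀ i, ‖β2 i‖ = 1) (hb3 : ∀ i, ‖β3 i‖ = 1)
    (hb4 : ∀ i, ‖β4 i‖ = 1)
    (hdec : rho0 θ t =
        ∑ i : Fin n₁, (t1 i : ℂ) • rank1 (z1 1 (β1 i) (γ1 i))
        + ∑ i : Fin n₂, ((t2 i : ℂ) / (t : ℂ) ^ 2) • rank1 (z2 t θ (β2 i))
        + ∑ i : Fin n₃, ((t3 i : ℂ) / (t : ℂ) ^ 2) • rank1 (z3 t θ (β3 i))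
        + ∑ i : Fin n₄, ((t4 i : ℂ) / (t : ℂ) ^ 2) • rank1 (z4 t θ (β4 i))) :
    10 ≤ n₁ + n₂ + n₃ + n₄ := by
  have htC : (t : ℂ) ≠ 0 := Complex.ofReal_ne_zero.mpr ht.ne'
  have ht2C : ((t : ℂ)) ^ 2 ≠ 0 := pow_ne_zero _ htC
  have hsC : ((Real.sqrt t : ℝ) : ℂ) ≠ 0 :=
    Complex.ofReal_ne_zero.mpr (Real.sqrt_pos.mpr ht).ne'
  have heC : Complex.exp (θ * Complex.I) ≠ 0 := Complex.exp_ne_zero _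
  have heCc : starRingEnd ℂ (Complex.exp (θ * Complex.I)) ≠ 0 := by
    rw [show starRingEnd ℂ (Complex.exp (θ * Complex.I))
        = star (Complex.exp (θ * Complex.I)) from rfl]
    exact star_ne_zero.mpr heC
  have hu1 : ∀ i, β1 i * starRingEnd ℂ (β1 i) = 1 := fun i => unit_of_abs (hb1 i)
  have hug : ∀ i, γ1 i * starRingEnd ℂ (γ1 i) = 1 := fun i => unit_of_abs (hg1 i)
  have hu2 : ∀ i, β2 i * starRingEnd ℂ (β2 i) = 1 := fun i => unit_of_abs (hb2 i)
  have hu4 : ∀ i, β4 i * starRingEnd ℂ (β4 i) = 1 := fun i => unit_of_abs (hb4 i)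
  -- entrywise equations
  have entry : ∀ p q : Fin 9, rho0 θ t p q =
      (∑ i, (t1 i : ℂ) * (z1 1 (β1 i) (γ1 i) p * starRingEnd ℂ (z1 1 (β1 i) (γ1 i) q)))
      + (∑ i, ((t2 i : ℂ) / (t : ℂ) ^ 2) * (z2 t θ (β2 i) p * starRingEnd ℂ (z2 t θ (β2 i) q)))
      + (∑ i, ((t3 i : ℂ) / (t : ℂ) ^ 2) * (z3 t θ (β3 i) p * starRingEnd ℂ (z3 t θ (β3 i) q)))
      + (∑ i, ((t4 i : ℂ) / (t : ℂ) ^ 2) * (z4 t θ (β4 i) p * starRingEnd ℂ (z4 t θ (β4 i) q))) := by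
    intro p q
    rw [hdec]
    simp [Matrix.sum_apply, rank1, Matrix.vecMulVec_apply, RCLike.star_def, smul_eq_mul,
      mul_assoc]
  -- (0,0)
  have hd00 : (3 : ℂ) = (∑ i, (t1 i : ℂ)) + ((∑ i, (t3 i : ℂ)) + (∑ i, (t4 i : ℂ))) := by
    have h := entry 0 0
    rw [show rho0 θ t 0 0 = 3 from rfl] at h
    have e1 : ∑ i, (t1 i : ℂ) * (z1 1 (β1 i) (γ1 i) 0 * starRingEnd ℂ (z1 1 (β1 i) (γ1 i) 0))
        = ∑ i, (t1 i : ℂ) := Finset.sum_congr rfl fun i _ => by rw [z1c0]; simp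
    have e2 : ∑ i, ((t2 i : ℂ) / (t : ℂ) ^ 2) * (z2 t θ (β2 i) 0 * starRingEnd ℂ (z2 t θ (β2 i) 0))
        = 0 := Finset.sum_eq_zero fun i _ => by rw [z2c0]; simp
    have e3 : ∑ i, ((t3 i : ℂ) / (t : ℂ) ^ 2) * (z3 t θ (β3 i) 0 * starRingEnd ℂ (z3 t θ (β3 i) 0))
        = ∑ i, (t3 i : ℂ) := Finset.sum_congr rfl fun i _ => by
      rw [z3c0, _root_.map_mul, Complex.conj_ofReal,
        show ((t : ℂ) * Complex.exp (θ * Complex.I))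
            * ((t : ℂ) * starRingEnd ℂ (Complex.exp (θ * Complex.I)))
          = ((t : ℂ) * (t : ℂ))
            * (Complex.exp (θ * Complex.I) * starRingEnd ℂ (Complex.exp (θ * Complex.I)))
          from by ring, exp_unit θ, mul_one]
      rw [divCancel9 ht2C _ (show (t : ℂ) * (t : ℂ) = (t : ℂ) ^ 2 * 1 from by ring), mul_one]
    have e4 : ∑ i, ((t4 i : ℂ) / (t : ℂ) ^ 2) * (z4 t θ (β4 i) 0 * starRingEnd ℂ (z4 t θ (β4 i) 0))
        = ∑ i, (t4 i : ℂ) := Finset.sum_congr rfl fun i _ => by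
      rw [z4c0,
        show ((Real.sqrt t : ℂ) * β4 i) * ((Real.sqrt t : ℂ) * starRingEnd ℂ (β4 i))
          = ((Real.sqrt t : ℂ) * (Real.sqrt t : ℂ)) * (β4 i * starRingEnd ℂ (β4 i)) from by ring,
        sqrt_sq' ht.le, hu4 i, mul_one, Complex.conj_ofReal]
      rw [divCancel9 ht2C _ (show (t : ℂ) * (t : ℂ) = (t : ℂ) ^ 2 * 1 from by ring), mul_one]
    rw [e1, e2, e3, e4] at h
    linear_combination h
  -- (1,1)
  have hd11 : (1 : ℂ) + (t : ℂ) = (∑ i, (t1 i : ℂ)) + (t : ℂ) * (∑ i, (t4 i : ℂ)) := by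
    have h := entry 1 1
    rw [show rho0 θ t 1 1 = 1 + (t : ℂ) from rfl] at h
    have e1 : ∑ i, (t1 i : ℂ) * (z1 1 (β1 i) (γ1 i) 1 * starRingEnd ℂ (z1 1 (β1 i) (γ1 i) 1))
        = ∑ i, (t1 i : ℂ) := Finset.sum_congr rfl fun i _ => by
      rw [z1c1, Complex.conj_conj,
        show starRingEnd ℂ (β1 i) * β1 i = β1 i * starRingEnd ℂ (β1 i) from mul_comm _ _,
        hu1 i, mul_one]
    have e2 : ∑ i, ((t2 i : ℂ) / (t : ℂ) ^ 2) * (z2 t θ (β2 i) 1 * starRingEnd ℂ (z2 t θ (β2 i) 1))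
        = 0 := Finset.sum_eq_zero fun i _ => by rw [z2c1]; simp
    have e3 : ∑ i, ((t3 i : ℂ) / (t : ℂ) ^ 2) * (z3 t θ (β3 i) 1 * starRingEnd ℂ (z3 t θ (β3 i) 1))
        = 0 := Finset.sum_eq_zero fun i _ => by rw [z3c1]; simp
    have e4 : ∑ i, ((t4 i : ℂ) / (t : ℂ) ^ 2) * (z4 t θ (β4 i) 1 * starRingEnd ℂ (z4 t θ (β4 i) 1))
        = ∑ i, (t : ℂ) * (t4 i : ℂ) := Finset.sum_congr rfl fun i _ => by
      rw [z4c1]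
      simp only [_root_.map_mul, Complex.conj_ofReal]
      rw [show ((Real.sqrt t : ℂ) * β4 i * ((t : ℂ) * Complex.exp (θ * Complex.I)))
          * ((Real.sqrt t : ℂ) * starRingEnd ℂ (β4 i)
            * ((t : ℂ) * starRingEnd ℂ (Complex.exp (θ * Complex.I))))
        = (((Real.sqrt t : ℂ) * (Real.sqrt t : ℂ)) * ((t : ℂ) * (t : ℂ)))
          * ((β4 i * starRingEnd ℂ (β4 i))
            * (Complex.exp (θ * Complex.I) * starRingEnd ℂ (Complex.exp (θ * Complex.I))))
        from by ring, sqrt_sq' ht.le, hu4 i, exp_unit θ, mul_one, mul_one]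
      rw [divCancel9 ht2C _ (show (t : ℂ) * ((t : ℂ) * (t : ℂ)) = (t : ℂ) ^ 2 * (t : ℂ)
        from by ring)]
      ring
    rw [e1, e2, e3, e4, ← Finset.mul_sum] at h
    linear_combination h
  -- (3,3)
  have hd33 : (1 : ℂ) + 1 / (t : ℂ) = (∑ i, (t1 i : ℂ)) + ((t : ℂ))⁻¹ * (∑ i, (t4 i : ℂ)) := by
    have h := entry 3 3
    rw [show rho0 θ t 3 3 = 1 + 1 / (t : ℂ) from rfl] at h
    have e1 : ∑ i, (t1 i : ℂ) * (z1 1 (β1 i) (γ1 i) 3 * starRingEnd ℂ (z1 1 (β1 i) (γ1 i) 3))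
        = ∑ i, (t1 i : ℂ) := Finset.sum_congr rfl fun i _ => by
      rw [z1c3, hu1 i, mul_one]
    have e2 : ∑ i, ((t2 i : ℂ) / (t : ℂ) ^ 2) * (z2 t θ (β2 i) 3 * starRingEnd ℂ (z2 t θ (β2 i) 3))
        = 0 := Finset.sum_eq_zero fun i _ => by rw [z2c3]; simp
    have e3 : ∑ i, ((t3 i : ℂ) / (t : ℂ) ^ 2) * (z3 t θ (β3 i) 3 * starRingEnd ℂ (z3 t θ (β3 i) 3))
        = 0 := Finset.sum_eq_zero fun i _ => by rw [z3c3]; simp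
    have e4 : ∑ i, ((t4 i : ℂ) / (t : ℂ) ^ 2) * (z4 t θ (β4 i) 3 * starRingEnd ℂ (z4 t θ (β4 i) 3))
        = ∑ i, ((t : ℂ))⁻¹ * (t4 i : ℂ) := Finset.sum_congr rfl fun i _ => by
      rw [z4c3, _root_.map_mul, Complex.conj_ofReal, Complex.conj_conj,
        show ((Real.sqrt t : ℂ) * starRingEnd ℂ (β4 i)) * ((Real.sqrt t : ℂ) * β4 i)
          = ((Real.sqrt t : ℂ) * (Real.sqrt t : ℂ)) * (β4 i * starRingEnd ℂ (β4 i)) from by ring,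
        sqrt_sq' ht.le, hu4 i, mul_one]
      rw [divCancel9 ht2C _ (show (t : ℂ) = (t : ℂ) ^ 2 * ((t : ℂ))⁻¹
        from by rw [pow_two, mul_assoc, mul_inv_cancel₀ htC, mul_one])]
      ring
    rw [e1, e2, e3, e4, ← Finset.mul_sum] at h
    linear_combination h
  -- (5,5)
  have hd55 : (1 : ℂ) + (t : ℂ) = (∑ i, (t1 i : ℂ)) + (t : ℂ) * (∑ i, (t2 i : ℂ)) := by
    have h := entry 5 5
    rw [show rho0 θ t 5 5 = 1 + (t : ℂ) from rfl] at h
    have e1 : ∑ i, (t1 i : ℂ) * (z1 1 (β1 i) (γ1 i) 5 * starRingEnd ℂ (z1 1 (β1 i) (γ1 i) 5))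
        = ∑ i, (t1 i : ℂ) := Finset.sum_congr rfl fun i _ => by
      rw [z1c5, _root_.map_mul, Complex.conj_conj,
        show (β1 i * starRingEnd ℂ (γ1 i)) * (starRingEnd ℂ (β1 i) * γ1 i)
          = (β1 i * starRingEnd ℂ (β1 i)) * (γ1 i * starRingEnd ℂ (γ1 i)) from by ring,
        hu1 i, hug i, mul_one, mul_one]
    have e2 : ∑ i, ((t2 i : ℂ) / (t : ℂ) ^ 2) * (z2 t θ (β2 i) 5 * starRingEnd ℂ (z2 t θ (β2 i) 5))
        = ∑ i, (t : ℂ) * (t2 i : ℂ) := Finset.sum_congr rfl fun i _ => by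
      rw [z2c5]
      simp only [_root_.map_mul, Complex.conj_ofReal]
      rw [show ((Real.sqrt t : ℂ) * β2 i * ((t : ℂ) * Complex.exp (θ * Complex.I)))
          * ((Real.sqrt t : ℂ) * starRingEnd ℂ (β2 i)
            * ((t : ℂ) * starRingEnd ℂ (Complex.exp (θ * Complex.I))))
        = (((Real.sqrt t : ℂ) * (Real.sqrt t : ℂ)) * ((t : ℂ) * (t : ℂ)))
          * ((β2 i * starRingEnd ℂ (β2 i))
            * (Complex.exp (θ * Complex.I) * starRingEnd ℂ (Complex.exp (θ * Complex.I))))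
        from by ring, sqrt_sq' ht.le, hu2 i, exp_unit θ, mul_one, mul_one]
      rw [divCancel9 ht2C _ (show (t : ℂ) * ((t : ℂ) * (t : ℂ)) = (t : ℂ) ^ 2 * (t : ℂ)
        from by ring)]
      ring
    have e3 : ∑ i, ((t3 i : ℂ) / (t : ℂ) ^ 2) * (z3 t θ (β3 i) 5 * starRingEnd ℂ (z3 t θ (β3 i) 5))
        = 0 := Finset.sum_eq_zero fun i _ => by rw [z3c5]; simp
    have e4 : ∑ i, ((t4 i : ℂ) / (t : ℂ) ^ 2) * (z4 t θ (β4 i) 5 * starRingEnd ℂ (z4 t θ (β4 i) 5))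
        = 0 := Finset.sum_eq_zero fun i _ => by rw [z4c5]; simp
    rw [e1, e2, e3, e4, ← Finset.mul_sum] at h
    linear_combination h
  -- (6,6)
  have hd66 : (1 : ℂ) + (t : ℂ) = (∑ i, (t1 i : ℂ)) + (t : ℂ) * (∑ i, (t3 i : ℂ)) := by
    have h := entry 6 6
    rw [show rho0 θ t 6 6 = 1 + (t : ℂ) from rfl] at h
    have e1 : ∑ i, (t1 i : ℂ) * (z1 1 (β1 i) (γ1 i) 6 * starRingEnd ℂ (z1 1 (β1 i) (γ1 i) 6))
        = ∑ i, (t1 i : ℂ) := Finset.sum_congr rfl fun i _ => by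
      rw [z1c6, hug i, mul_one]
    have e2 : ∑ i, ((t2 i : ℂ) / (t : ℂ) ^ 2) * (z2 t θ (β2 i) 6 * starRingEnd ℂ (z2 t θ (β2 i) 6))
        = 0 := Finset.sum_eq_zero fun i _ => by rw [z2c6]; simp
    have e3 : ∑ i, ((t3 i : ℂ) / (t : ℂ) ^ 2) * (z3 t θ (β3 i) 6 * starRingEnd ℂ (z3 t θ (β3 i) 6))
        = ∑ i, (t : ℂ) * (t3 i : ℂ) := Finset.sum_congr rfl fun i _ => by
      rw [z3c6]
      simp only [_root_.map_mul, Complex.conj_ofReal]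
      rw [show ((Real.sqrt t : ℂ) * β3 i * ((t : ℂ) * Complex.exp (θ * Complex.I)))
          * ((Real.sqrt t : ℂ) * starRingEnd ℂ (β3 i)
            * ((t : ℂ) * starRingEnd ℂ (Complex.exp (θ * Complex.I))))
        = (((Real.sqrt t : ℂ) * (Real.sqrt t : ℂ)) * ((t : ℂ) * (t : ℂ)))
          * ((β3 i * starRingEnd ℂ (β3 i))
            * (Complex.exp (θ * Complex.I) * starRingEnd ℂ (Complex.exp (θ * Complex.I))))
        from by ring, sqrt_sq' ht.le, unit_of_abs (hb3 i), exp_unit θ, mul_one, mul_one]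
      rw [divCancel9 ht2C _ (show (t : ℂ) * ((t : ℂ) * (t : ℂ)) = (t : ℂ) ^ 2 * (t : ℂ)
        from by ring)]
      ring
    have e4 : ∑ i, ((t4 i : ℂ) / (t : ℂ) ^ 2) * (z4 t θ (β4 i) 6 * starRingEnd ℂ (z4 t θ (β4 i) 6))
        = 0 := Finset.sum_eq_zero fun i _ => by rw [z4c6]; simp
    rw [e1, e2, e3, e4, ← Finset.mul_sum] at h
    linear_combination h
  -- (1,8) : first moment of β1
  have hSb' : ∑ i, (t1 i : ℂ) * starRingEnd ℂ (β1 i) = 0 := by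
    have h := entry 1 8
    rw [show rho0 θ t 1 8 = 0 from rfl] at h
    have e1 : ∑ i, (t1 i : ℂ) * (z1 1 (β1 i) (γ1 i) 1 * starRingEnd ℂ (z1 1 (β1 i) (γ1 i) 8))
        = ∑ i, (t1 i : ℂ) * starRingEnd ℂ (β1 i) := Finset.sum_congr rfl fun i _ => by
      rw [z1c1, z1c8, hug i]; simp
    have e2 : ∑ i, ((t2 i : ℂ) / (t : ℂ) ^ 2) * (z2 t θ (β2 i) 1 * starRingEnd ℂ (z2 t θ (β2 i) 8))
        = 0 := Finset.sum_eq_zero fun i _ => by rw [z2c1]; simp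
    have e3 : ∑ i, ((t3 i : ℂ) / (t : ℂ) ^ 2) * (z3 t θ (β3 i) 1 * starRingEnd ℂ (z3 t θ (β3 i) 8))
        = 0 := Finset.sum_eq_zero fun i _ => by rw [z3c1]; simp
    have e4 : ∑ i, ((t4 i : ℂ) / (t : ℂ) ^ 2) * (z4 t θ (β4 i) 1 * starRingEnd ℂ (z4 t θ (β4 i) 8))
        = 0 := Finset.sum_eq_zero fun i _ => by rw [z4c8]; simp
    rw [e1, e2, e3, e4] at h
    linear_combination -h
  have hSb : ∑ i, (t1 i : ℂ) * β1 i = 0 := sum_conj_zero hSb'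
  -- (2,4) : first moment of γ1
  have hSg' : ∑ i, (t1 i : ℂ) * starRingEnd ℂ (γ1 i) = 0 := by
    have h := entry 2 4
    rw [show rho0 θ t 2 4 = 0 from rfl] at h
    have e1 : ∑ i, (t1 i : ℂ) * (z1 1 (β1 i) (γ1 i) 2 * starRingEnd ℂ (z1 1 (β1 i) (γ1 i) 4))
        = ∑ i, (t1 i : ℂ) * starRingEnd ℂ (γ1 i) := Finset.sum_congr rfl fun i _ => by
      rw [z1c2, z1c4, hu1 i]; simp
    have e2 : ∑ i, ((t2 i : ℂ) / (t : ℂ) ^ 2) * (z2 t θ (β2 i) 2 * starRingEnd ℂ (z2 t θ (β2 i) 4))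
        = 0 := Finset.sum_eq_zero fun i _ => by rw [z2c2]; simp
    have e3 : ∑ i, ((t3 i : ℂ) / (t : ℂ) ^ 2) * (z3 t θ (β3 i) 2 * starRingEnd ℂ (z3 t θ (β3 i) 4))
        = 0 := Finset.sum_eq_zero fun i _ => by rw [z3c4]; simp
    have e4 : ∑ i, ((t4 i : ℂ) / (t : ℂ) ^ 2) * (z4 t θ (β4 i) 2 * starRingEnd ℂ (z4 t θ (β4 i) 4))
        = 0 := Finset.sum_eq_zero fun i _ => by rw [z4c2]; simp
    rw [e1, e2, e3, e4] at h
    linear_combination -h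
  have hSg : ∑ i, (t1 i : ℂ) * γ1 i = 0 := sum_conj_zero hSg'
  -- (0,5) : cross moment
  have hSbg' : ∑ i, (t1 i : ℂ) * (starRingEnd ℂ (β1 i) * γ1 i) = 0 := by
    have h := entry 0 5
    rw [show rho0 θ t 0 5 = 0 from rfl] at h
    have e1 : ∑ i, (t1 i : ℂ) * (z1 1 (β1 i) (γ1 i) 0 * starRingEnd ℂ (z1 1 (β1 i) (γ1 i) 5))
        = ∑ i, (t1 i : ℂ) * (starRingEnd ℂ (β1 i) * γ1 i) := Finset.sum_congr rfl fun i _ => by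
      rw [z1c0, z1c5, one_mul, _root_.map_mul, Complex.conj_conj]
    have e2 : ∑ i, ((t2 i : ℂ) / (t : ℂ) ^ 2) * (z2 t θ (β2 i) 0 * starRingEnd ℂ (z2 t θ (β2 i) 5))
        = 0 := Finset.sum_eq_zero fun i _ => by rw [z2c0]; simp
    have e3 : ∑ i, ((t3 i : ℂ) / (t : ℂ) ^ 2) * (z3 t θ (β3 i) 0 * starRingEnd ℂ (z3 t θ (β3 i) 5))
        = 0 := Finset.sum_eq_zero fun i _ => by rw [z3c5]; simp
    have e4 : ∑ i, ((t4 i : ℂ) / (t : ℂ) ^ 2) * (z4 t θ (β4 i) 0 * starRingEnd ℂ (z4 t θ (β4 i) 5))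
        = 0 := Finset.sum_eq_zero fun i _ => by rw [z4c5]; simp
    rw [e1, e2, e3, e4] at h
    linear_combination -h
  -- (0,1) : first moment of β4
  have hM41 : ∑ i, (t4 i : ℂ) * β4 i = 0 := by
    have h := entry 0 1
    rw [show rho0 θ t 0 1 = 0 from rfl] at h
    have e1 : ∑ i, (t1 i : ℂ) * (z1 1 (β1 i) (γ1 i) 0 * starRingEnd ℂ (z1 1 (β1 i) (γ1 i) 1))
        = ∑ i, (t1 i : ℂ) * β1 i := Finset.sum_congr rfl fun i _ => by
      rw [z1c0, z1c1, one_mul, Complex.conj_conj]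
    have e2 : ∑ i, ((t2 i : ℂ) / (t : ℂ) ^ 2) * (z2 t θ (β2 i) 0 * starRingEnd ℂ (z2 t θ (β2 i) 1))
        = 0 := Finset.sum_eq_zero fun i _ => by rw [z2c0]; simp
    have e3 : ∑ i, ((t3 i : ℂ) / (t : ℂ) ^ 2) * (z3 t θ (β3 i) 0 * starRingEnd ℂ (z3 t θ (β3 i) 1))
        = 0 := Finset.sum_eq_zero fun i _ => by rw [z3c1]; simp
    have e4 : ∑ i, ((t4 i : ℂ) / (t : ℂ) ^ 2) * (z4 t θ (β4 i) 0 * starRingEnd ℂ (z4 t θ (β4 i) 1))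
        = ∑ i, ((t : ℂ) * (t : ℂ) / (t : ℂ) ^ 2
            * ((Real.sqrt t : ℂ) * starRingEnd ℂ (Complex.exp (θ * Complex.I))))
          * ((t4 i : ℂ) * starRingEnd ℂ (β4 i)) := Finset.sum_congr rfl fun i _ => by
      rw [z4c0, z4c1,
        show ((Real.sqrt t : ℂ) * β4 i) * ((Real.sqrt t : ℂ) * starRingEnd ℂ (β4 i))
          = ((Real.sqrt t : ℂ) * (Real.sqrt t : ℂ)) * (β4 i * starRingEnd ℂ (β4 i)) from by ring,
        sqrt_sq' ht.le, hu4 i, mul_one]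
      simp only [_root_.map_mul, Complex.conj_ofReal]
      ring
    rw [e1, e2, e3, e4, ← Finset.mul_sum] at h
    have hco : ((t : ℂ) * (t : ℂ) / (t : ℂ) ^ 2
        * ((Real.sqrt t : ℂ) * starRingEnd ℂ (Complex.exp (θ * Complex.I)))) ≠ 0 :=
      mul_ne_zero (div_ne_zero (mul_ne_zero htC htC) ht2C) (mul_ne_zero hsC heCc)
    have h2 : ((t : ℂ) * (t : ℂ) / (t : ℂ) ^ 2
        * ((Real.sqrt t : ℂ) * starRingEnd ℂ (Complex.exp (θ * Complex.I))))
        * (∑ i, (t4 i : ℂ) * starRingEnd ℂ (β4 i)) = 0 := by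
      linear_combination -h - hSb
    exact sum_conj_zero ((mul_eq_zero.mp h2).resolve_left hco)
  -- (0,2) : first moment of β3
  have hM31 : ∑ i, (t3 i : ℂ) * β3 i = 0 := by
    have h := entry 0 2
    rw [show rho0 θ t 0 2 = 0 from rfl] at h
    have e1 : ∑ i, (t1 i : ℂ) * (z1 1 (β1 i) (γ1 i) 0 * starRingEnd ℂ (z1 1 (β1 i) (γ1 i) 2))
        = ∑ i, (t1 i : ℂ) * γ1 i := Finset.sum_congr rfl fun i _ => by
      rw [z1c0, z1c2, one_mul, Complex.conj_conj]
    have e2 : ∑ i, ((t2 i : ℂ) / (t : ℂ) ^ 2) * (z2 t θ (β2 i) 0 * starRingEnd ℂ (z2 t θ (β2 i) 2))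
        = 0 := Finset.sum_eq_zero fun i _ => by rw [z2c0]; simp
    have e3 : ∑ i, ((t3 i : ℂ) / (t : ℂ) ^ 2) * (z3 t θ (β3 i) 0 * starRingEnd ℂ (z3 t θ (β3 i) 2))
        = ∑ i, ((t : ℂ) / (t : ℂ) ^ 2 * ((Real.sqrt t : ℂ) * Complex.exp (θ * Complex.I)))
          * ((t3 i : ℂ) * β3 i) := Finset.sum_congr rfl fun i _ => by
      rw [z3c0, z3c2]
      simp only [_root_.map_mul, Complex.conj_ofReal, Complex.conj_conj]
      ring
    have e4 : ∑ i, ((t4 i : ℂ) / (t : ℂ) ^ 2) * (z4 t θ (β4 i) 0 * starRingEnd ℂ (z4 t θ (β4 i) 2))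
        = 0 := Finset.sum_eq_zero fun i _ => by rw [z4c2]; simp
    rw [e1, e2, e3, e4, ← Finset.mul_sum] at h
    have hco : ((t : ℂ) / (t : ℂ) ^ 2 * ((Real.sqrt t : ℂ) * Complex.exp (θ * Complex.I))) ≠ 0 :=
      mul_ne_zero (div_ne_zero htC ht2C) (mul_ne_zero hsC heC)
    have h2 : ((t : ℂ) / (t : ℂ) ^ 2 * ((Real.sqrt t : ℂ) * Complex.exp (θ * Complex.I)))
        * (∑ i, (t3 i : ℂ) * β3 i) = 0 := by
      linear_combination -h - hSg
    exact (mul_eq_zero.mp h2).resolve_left hco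
  -- (4,5) : first moment of β2
  have hM21 : ∑ i, (t2 i : ℂ) * β2 i = 0 := by
    have h := entry 4 5
    rw [show rho0 θ t 4 5 = 0 from rfl] at h
    have e1 : ∑ i, (t1 i : ℂ) * (z1 1 (β1 i) (γ1 i) 4 * starRingEnd ℂ (z1 1 (β1 i) (γ1 i) 5))
        = ∑ i, (t1 i : ℂ) * (starRingEnd ℂ (β1 i) * γ1 i) := Finset.sum_congr rfl fun i _ => by
      rw [z1c4, z1c5, hu1 i, one_mul, _root_.map_mul, Complex.conj_conj]
    have e2 : ∑ i, ((t2 i : ℂ) / (t : ℂ) ^ 2) * (z2 t θ (β2 i) 4 * starRingEnd ℂ (z2 t θ (β2 i) 5))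
        = ∑ i, ((t : ℂ) * (t : ℂ) / (t : ℂ) ^ 2
            * ((Real.sqrt t : ℂ) * starRingEnd ℂ (Complex.exp (θ * Complex.I))))
          * ((t2 i : ℂ) * starRingEnd ℂ (β2 i)) := Finset.sum_congr rfl fun i _ => by
      rw [z2c4, z2c5,
        show ((Real.sqrt t : ℂ) * β2 i) * ((Real.sqrt t : ℂ) * starRingEnd ℂ (β2 i))
          = ((Real.sqrt t : ℂ) * (Real.sqrt t : ℂ)) * (β2 i * starRingEnd ℂ (β2 i)) from by ring,
        sqrt_sq' ht.le, hu2 i, mul_one]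
      simp only [_root_.map_mul, Complex.conj_ofReal]
      ring
    have e3 : ∑ i, ((t3 i : ℂ) / (t : ℂ) ^ 2) * (z3 t θ (β3 i) 4 * starRingEnd ℂ (z3 t θ (β3 i) 5))
        = 0 := Finset.sum_eq_zero fun i _ => by rw [z3c4]; simp
    have e4 : ∑ i, ((t4 i : ℂ) / (t : ℂ) ^ 2) * (z4 t θ (β4 i) 4 * starRingEnd ℂ (z4 t θ (β4 i) 5))
        = 0 := Finset.sum_eq_zero fun i _ => by rw [z4c5]; simp
    rw [e1, e2, e3, e4, ← Finset.mul_sum] at h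
    have hco : ((t : ℂ) * (t : ℂ) / (t : ℂ) ^ 2
        * ((Real.sqrt t : ℂ) * starRingEnd ℂ (Complex.exp (θ * Complex.I)))) ≠ 0 :=
      mul_ne_zero (div_ne_zero (mul_ne_zero htC htC) ht2C) (mul_ne_zero hsC heCc)
    have h2 : ((t : ℂ) * (t : ℂ) / (t : ℂ) ^ 2
        * ((Real.sqrt t : ℂ) * starRingEnd ℂ (Complex.exp (θ * Complex.I))))
        * (∑ i, (t2 i : ℂ) * starRingEnd ℂ (β2 i)) = 0 := by
      linear_combination -h - hSbg'
    exact sum_conj_zero ((mul_eq_zero.mp h2).resolve_left hco)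
  -- coefficient normalization
  have hco13 : (Real.sqrt t : ℂ) * (Real.sqrt t : ℂ) * (t : ℂ) / (t : ℂ) ^ 2 = 1 := by
    rw [sqrt_sq' ht.le, ← pow_two, div_self ht2C]
  -- (1,3) : second moment relation for β1
  have hE13 : ∑ i, (t1 i : ℂ) * (starRingEnd ℂ (β1 i) * starRingEnd ℂ (β1 i))
      = -(Complex.exp (θ * Complex.I) * (∑ i, (t4 i : ℂ) * (β4 i * β4 i))) := by
    have h := entry 1 3
    rw [show rho0 θ t 1 3 = 0 from rfl] at h
    have e1 : ∑ i, (t1 i : ℂ) * (z1 1 (β1 i) (γ1 i) 1 * starRingEnd ℂ (z1 1 (β1 i) (γ1 i) 3))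
        = ∑ i, (t1 i : ℂ) * (starRingEnd ℂ (β1 i) * starRingEnd ℂ (β1 i)) :=
      Finset.sum_congr rfl fun i _ => by rw [z1c1, z1c3]
    have e2 : ∑ i, ((t2 i : ℂ) / (t : ℂ) ^ 2) * (z2 t θ (β2 i) 1 * starRingEnd ℂ (z2 t θ (β2 i) 3))
        = 0 := Finset.sum_eq_zero fun i _ => by rw [z2c1]; simp
    have e3 : ∑ i, ((t3 i : ℂ) / (t : ℂ) ^ 2) * (z3 t θ (β3 i) 1 * starRingEnd ℂ (z3 t θ (β3 i) 3))
        = 0 := Finset.sum_eq_zero fun i _ => by rw [z3c1]; simp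
    have e4 : ∑ i, ((t4 i : ℂ) / (t : ℂ) ^ 2) * (z4 t θ (β4 i) 1 * starRingEnd ℂ (z4 t θ (β4 i) 3))
        = ∑ i, ((Real.sqrt t : ℂ) * (Real.sqrt t : ℂ) * (t : ℂ) / (t : ℂ) ^ 2
            * Complex.exp (θ * Complex.I)) * ((t4 i : ℂ) * (β4 i * β4 i)) :=
      Finset.sum_congr rfl fun i _ => by
        rw [z4c1, z4c3]
        simp only [_root_.map_mul, Complex.conj_ofReal, Complex.conj_conj]
        ring
    rw [e1, e2, e3, e4, ← Finset.mul_sum] at h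
    linear_combination -h
      - (Complex.exp (θ * Complex.I) * ∑ i, (t4 i : ℂ) * (β4 i * β4 i)) * hco13
  -- (2,6) : second moment relation for γ1
  have hE26 : ∑ i, (t1 i : ℂ) * (starRingEnd ℂ (γ1 i) * starRingEnd ℂ (γ1 i))
      = -(starRingEnd ℂ (Complex.exp (θ * Complex.I))
        * (∑ i, (t3 i : ℂ) * (starRingEnd ℂ (β3 i) * starRingEnd ℂ (β3 i)))) := by
    have h := entry 2 6
    rw [show rho0 θ t 2 6 = 0 from rfl] at h
    have e1 : ∑ i, (t1 i : ℂ) * (z1 1 (β1 i) (γ1 i) 2 * starRingEnd ℂ (z1 1 (β1 i) (γ1 i) 6))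
        = ∑ i, (t1 i : ℂ) * (starRingEnd ℂ (γ1 i) * starRingEnd ℂ (γ1 i)) :=
      Finset.sum_congr rfl fun i _ => by rw [z1c2, z1c6]
    have e2 : ∑ i, ((t2 i : ℂ) / (t : ℂ) ^ 2) * (z2 t θ (β2 i) 2 * starRingEnd ℂ (z2 t θ (β2 i) 6))
        = 0 := Finset.sum_eq_zero fun i _ => by rw [z2c2]; simp
    have e3 : ∑ i, ((t3 i : ℂ) / (t : ℂ) ^ 2) * (z3 t θ (β3 i) 2 * starRingEnd ℂ (z3 t θ (β3 i) 6))
        = ∑ i, ((Real.sqrt t : ℂ) * (Real.sqrt t : ℂ) * (t : ℂ) / (t : ℂ) ^ 2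
            * starRingEnd ℂ (Complex.exp (θ * Complex.I)))
          * ((t3 i : ℂ) * (starRingEnd ℂ (β3 i) * starRingEnd ℂ (β3 i))) :=
      Finset.sum_congr rfl fun i _ => by
        rw [z3c2, z3c6]
        simp only [_root_.map_mul, Complex.conj_ofReal]
        ring
    have e4 : ∑ i, ((t4 i : ℂ) / (t : ℂ) ^ 2) * (z4 t θ (β4 i) 2 * starRingEnd ℂ (z4 t θ (β4 i) 6))
        = 0 := Finset.sum_eq_zero fun i _ => by rw [z4c2]; simp
    rw [e1, e2, e3, e4, ← Finset.mul_sum] at h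
    linear_combination -h
      - (starRingEnd ℂ (Complex.exp (θ * Complex.I))
        * ∑ i, (t3 i : ℂ) * (starRingEnd ℂ (β3 i) * starRingEnd ℂ (β3 i))) * hco13
  -- total weights are all 1
  have hA34 : (∑ i, (t3 i : ℂ)) = (∑ i, (t4 i : ℂ)) :=
    mul_left_cancel₀ htC (by linear_combination hd11 - hd66)
  have hA24 : (∑ i, (t2 i : ℂ)) = (∑ i, (t4 i : ℂ)) :=
    mul_left_cancel₀ htC (by linear_combination hd11 - hd55)
  have hA4 : (∑ i, (t4 i : ℂ)) = 1 := by
    rcases eq_or_ne (t : ℂ) 2 with h2 | h2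
    · refine mul_left_cancel₀ (show ((3 : ℂ) / 2) ≠ 0 from by norm_num) ?_
      rw [h2] at hd33
      linear_combination -hd00 + hd33 - hA34
    · refine mul_left_cancel₀ (sub_ne_zero.mpr h2) ?_
      linear_combination -hd11 + hd00 + hA34
  have hA3 : (∑ i, (t3 i : ℂ)) = 1 := hA34.trans hA4
  have hA2 : (∑ i, (t2 i : ℂ)) = 1 := hA24.trans hA4
  have hA1 : (∑ i, (t1 i : ℂ)) = 1 := by linear_combination -hd00 - hA3 - hA4
  -- lower bounds on the numbers of terms
  have hn2 : 2 ≤ n₂ := by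
    by_contra hcon
    push_neg at hcon
    interval_cases n₂
    · simp at hA2
    · rw [Fin.sum_univ_one] at hM21
      have hβ : β2 0 ≠ 0 := by
        intro h0
        have habs0 := hb2 0
        rw [h0] at habs0
        simp at habs0
      exact (mul_ne_zero (Complex.ofReal_ne_zero.mpr (hp2 0).ne') hβ) hM21
  have hn3 : 2 ≤ n₃ := by
    by_contra hcon
    push_neg at hcon
    interval_cases n₃
    · simp at hA3
    · rw [Fin.sum_univ_one] at hM31
      have hβ : β3 0 ≠ 0 := by
        intro h0
        have habs0 := hb3 0
        rw [h0] at habs0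
        simp at habs0
      exact (mul_ne_zero (Complex.ofReal_ne_zero.mpr (hp3 0).ne') hβ) hM31
  have hn4 : 2 ≤ n₄ := by
    by_contra hcon
    push_neg at hcon
    interval_cases n₄
    · simp at hA4
    · rw [Fin.sum_univ_one] at hM41
      have hβ : β4 0 ≠ 0 := by
        intro h0
        have habs0 := hb4 0
        rw [h0] at habs0
        simp at habs0
      exact (mul_ne_zero (Complex.ofReal_ne_zero.mpr (hp4 0).ne') hβ) hM41
  have hn1 : 3 ≤ n₁ := by
    by_contra hcon
    push_neg at hcon
    interval_cases n₁
    · simp at hA1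
    · rw [Fin.sum_univ_one] at hSb
      have hβ : β1 0 ≠ 0 := by
        intro h0
        have habs0 := hb1 0
        rw [h0] at habs0
        simp at habs0
      exact (mul_ne_zero (Complex.ofReal_ne_zero.mpr (hp1 0).ne') hβ) hSb
    · rw [Fin.sum_univ_two] at hSb hSg hSbg'
      obtain ⟨hw, hb⟩ := pair_cancel (hp1 0) (hp1 1) (hb1 0) (hb1 1) hSb
      obtain ⟨-, hg⟩ := pair_cancel (hp1 0) (hp1 1) (hg1 0) (hg1 1) hSg
      rw [hb, hg, map_neg] at hSbg'
      have hwc : ((t1 1 : ℝ) : ℂ) = ((t1 0 : ℝ) : ℂ) := by exact_mod_cast hw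
      have hmain : ((t1 0 : ℂ) + (t1 0 : ℂ)) * (starRingEnd ℂ (β1 0) * γ1 0) = 0 := by
        linear_combination hSbg' - (starRingEnd ℂ (β1 0) * γ1 0) * hwc
      have h2ne : ((t1 0 : ℂ) + (t1 0 : ℂ)) ≠ 0 := by
        rw [← Complex.ofReal_add]
        exact Complex.ofReal_ne_zero.mpr (ne_of_gt (by linarith [hp1 0]))
      have hβ0 : β1 0 ≠ 0 := by
        intro h0
        have habs0 := hb1 0
        rw [h0] at habs0
        simp at habs0
      have hγ0 : γ1 0 ≠ 0 := by
        intro h0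
        have habs0 := hg1 0
        rw [h0] at habs0
        simp at habs0
      have hβc : starRingEnd ℂ (β1 0) ≠ 0 := by
        rw [show starRingEnd ℂ (β1 0) = star (β1 0) from rfl]
        exact star_ne_zero.mpr hβ0
      exact (mul_ne_zero h2ne (mul_ne_zero hβc hγ0)) hmain
  -- final contradiction for the nine-term case
  by_contra hN
  push_neg at hN
  have he1 : n₁ = 3 := by omega
  have he2 : n₂ = 2 := by omega
  have he3 : n₃ = 2 := by omega
  have he4 : n₄ = 2 := by omega
  subst he1; subst he2; subst he3; subst he4
  -- structure of the pairs (β4) and (β3)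
  rw [Fin.sum_univ_two] at hM41 hA4 hM31 hA3
  obtain ⟨hw4, hb4eq⟩ := pair_cancel (hp4 0) (hp4 1) (hb4 0) (hb4 1) hM41
  obtain ⟨hw3, hb3eq⟩ := pair_cancel (hp3 0) (hp3 1) (hb3 0) (hb3 1) hM31
  have hQ4 : (∑ i, (t4 i : ℂ) * (β4 i * β4 i)) = β4 0 * β4 0 := by
    rw [Fin.sum_univ_two, hb4eq]
    linear_combination (β4 0 * β4 0) * hA4
  have hQ3 : (∑ i, (t3 i : ℂ) * (starRingEnd ℂ (β3 i) * starRingEnd ℂ (β3 i)))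
      = starRingEnd ℂ (β3 0) * starRingEnd ℂ (β3 0) := by
    rw [Fin.sum_univ_two, hb3eq, map_neg]
    linear_combination (starRingEnd ℂ (β3 0) * starRingEnd ℂ (β3 0)) * hA3
  -- all β1 i squares coincide; same for γ1
  have habs13 : ‖∑ i, (t1 i : ℂ)
      * (starRingEnd ℂ (β1 i) * starRingEnd ℂ (β1 i))‖ = 1 := by
    rw [hE13, hQ4, show -(Complex.exp (θ * Complex.I) * (β4 0 * β4 0))
      = (-1 : ℂ) * (Complex.exp (θ * Complex.I) * (β4 0 * β4 0)) from by ring]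
    simp [norm_mul, Complex.norm_exp_ofReal_mul_I, hb4 0]
  have habs26 : ‖∑ i, (t1 i : ℂ)
      * (starRingEnd ℂ (γ1 i) * starRingEnd ℂ (γ1 i))‖ = 1 := by
    rw [hE26, hQ3, show -(starRingEnd ℂ (Complex.exp (θ * Complex.I))
        * (starRingEnd ℂ (β3 0) * starRingEnd ℂ (β3 0)))
      = (-1 : ℂ) * (starRingEnd ℂ (Complex.exp (θ * Complex.I))
        * (starRingEnd ℂ (β3 0) * starRingEnd ℂ (β3 0))) from by ring]
    simp [norm_mul, Complex.norm_conj, Complex.norm_exp_ofReal_mul_I, hb3 0]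
  have hx13 : ∀ i, ‖starRingEnd ℂ (β1 i) * starRingEnd ℂ (β1 i)‖ = 1 := fun i => by
    rw [norm_mul, Complex.norm_conj, hb1 i]; norm_num
  have hx26 : ∀ i, ‖starRingEnd ℂ (γ1 i) * starRingEnd ℂ (γ1 i)‖ = 1 := fun i => by
    rw [norm_mul, Complex.norm_conj, hg1 i]; norm_num
  have hall13 := all_eq_of_abs_one t1 (fun i => starRingEnd ℂ (β1 i) * starRingEnd ℂ (β1 i))
    hp1 hx13 hA1 habs13
  have hall26 := all_eq_of_abs_one t1 (fun i => starRingEnd ℂ (γ1 i) * starRingEnd ℂ (γ1 i))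
    hp1 hx26 hA1 habs26
  have hsqb : ∀ i, β1 i * β1 i = β1 0 * β1 0 := by
    intro i
    have h1 := (hall13 i).trans (hall13 0).symm
    have h2 := congrArg (starRingEnd ℂ) h1
    simpa [_root_.map_mul, Complex.conj_conj] using h2
  have hsqg : ∀ i, γ1 i * γ1 i = γ1 0 * γ1 0 := by
    intro i
    have h1 := (hall26 i).trans (hall26 0).symm
    have h2 := congrArg (starRingEnd ℂ) h1
    simpa [_root_.map_mul, Complex.conj_conj] using h2
  have hβpm : ∀ i, β1 i = β1 0 ∨ β1 i = -β1 0 := fun i => by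
    have h0 : (β1 i - β1 0) * (β1 i + β1 0) = 0 := by linear_combination hsqb i
    rcases mul_eq_zero.mp h0 with h | h
    · exact Or.inl (sub_eq_zero.mp h)
    · exact Or.inr (eq_neg_of_add_eq_zero_left h)
  have hγpm : ∀ i, γ1 i = γ1 0 ∨ γ1 i = -γ1 0 := fun i => by
    have h0 : (γ1 i - γ1 0) * (γ1 i + γ1 0) = 0 := by linear_combination hsqg i
    rcases mul_eq_zero.mp h0 with h | h
    · exact Or.inl (sub_eq_zero.mp h)
    · exact Or.inr (eq_neg_of_add_eq_zero_left h)
  have hεpm : ∀ i, β1 i * starRingEnd ℂ (β1 0) = 1 ∨ β1 i * starRingEnd ℂ (β1 0) = -1 :=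
    fun i => by
      rcases hβpm i with h | h
      · exact Or.inl (by rw [h]; exact hu1 0)
      · exact Or.inr (by rw [h, neg_mul, hu1 0])
  have hδpm : ∀ i, starRingEnd ℂ (γ1 i) * γ1 0 = 1 ∨ starRingEnd ℂ (γ1 i) * γ1 0 = -1 :=
    fun i => by
      rcases hγpm i with h | h
      · exact Or.inl (by rw [h, mul_comm]; exact hug 0)
      · exact Or.inr (by
          rw [h, map_neg, neg_mul, mul_comm (starRingEnd ℂ (γ1 0)) (γ1 0), hug 0])
  -- the fourth moment sum
  have hSbgC : ∑ i, (t1 i : ℂ) * (β1 i * starRingEnd ℂ (γ1 i)) = 0 := by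
    have h2 := congrArg (starRingEnd ℂ) hSbg'
    simpa [map_sum, _root_.map_mul, Complex.conj_ofReal, Complex.conj_conj, mul_comm]
      using h2
  have hkey : ∀ s r : ℂ, ∑ i, (t1 i : ℂ) * ((1 + s * (β1 i * starRingEnd ℂ (β1 0)))
      * (1 + r * (starRingEnd ℂ (γ1 i) * γ1 0))) = 1 := by
    intro s r
    have expand : ∀ i ∈ Finset.univ, (t1 i : ℂ) * ((1 + s * (β1 i * starRingEnd ℂ (β1 0)))
        * (1 + r * (starRingEnd ℂ (γ1 i) * γ1 0)))
        = (t1 i : ℂ) + ((s * starRingEnd ℂ (β1 0)) * ((t1 i : ℂ) * β1 i)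
          + ((r * γ1 0) * ((t1 i : ℂ) * starRingEnd ℂ (γ1 i))
          + ((s * r) * (starRingEnd ℂ (β1 0) * γ1 0))
            * ((t1 i : ℂ) * (β1 i * starRingEnd ℂ (γ1 i))))) := fun i _ => by ring
    rw [Finset.sum_congr rfl expand, Finset.sum_add_distrib, Finset.sum_add_distrib,
      Finset.sum_add_distrib, ← Finset.mul_sum, ← Finset.mul_sum, ← Finset.mul_sum,
      hSb, hSg', hSbgC, hA1]
    ring
  have hex : ∀ s r : ℂ, (s = 1 ∨ s = -1) → (r = 1 ∨ r = -1) →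
      ∃ i : Fin 3, β1 i * starRingEnd ℂ (β1 0) = s ∧ starRingEnd ℂ (γ1 i) * γ1 0 = r := by
    intro s r hs hr
    by_contra hno
    push_neg at hno
    have h0 : ∑ i, (t1 i : ℂ) * ((1 + s * (β1 i * starRingEnd ℂ (β1 0)))
        * (1 + r * (starRingEnd ℂ (γ1 i) * γ1 0))) = 0 := by
      refine Finset.sum_eq_zero fun i _ => ?_
      rcases hεpm i with h1 | h1 <;> rcases hδpm i with h2 | h2 <;>
        rcases hs with rfl | rfl <;> rcases hr with rfl | rfl <;>
        first
          | exact absurd h2 (hno i h1)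
          | (rw [h1, h2]; ring)
    rw [hkey s r] at h0
    exact one_ne_zero h0
  obtain ⟨i1, q11, q12⟩ := hex 1 1 (Or.inl rfl) (Or.inl rfl)
  obtain ⟨i2, q21, q22⟩ := hex 1 (-1) (Or.inl rfl) (Or.inr rfl)
  obtain ⟨i3, q31, q32⟩ := hex (-1) 1 (Or.inr rfl) (Or.inl rfl)
  obtain ⟨i4, q41, q42⟩ := hex (-1) (-1) (Or.inr rfl) (Or.inr rfl)
  have hOne : (1 : ℂ) ≠ -1 := by norm_num
  have d12 : i1 ≠ i2 := by intro h; rw [h] at q12; exact hOne (q12.symm.trans q22)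
  have d13 : i1 ≠ i3 := by intro h; rw [h] at q11; exact hOne (q11.symm.trans q31)
  have d14 : i1 ≠ i4 := by intro h; rw [h] at q11; exact hOne (q11.symm.trans q41)
  have d23 : i2 ≠ i3 := by intro h; rw [h] at q21; exact hOne (q21.symm.trans q31)
  have d24 : i2 ≠ i4 := by intro h; rw [h] at q21; exact hOne (q21.symm.trans q41)
  have d34 : i3 ≠ i4 := by intro h; rw [h] at q32; exact hOne (q32.symm.trans q42)
  have l1 := i1.isLt
  have l2 := i2.isLt
  have l3 := i3.isLt
  have l4 := i4.isLt
  have v12 : i1.val ≠ i2.val := fun h => d12 (Fin.ext h)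
  have v13 : i1.val ≠ i3.val := fun h => d13 (Fin.ext h)
  have v14 : i1.val ≠ i4.val := fun h => d14 (Fin.ext h)
  have v23 : i2.val ≠ i3.val := fun h => d23 (Fin.ext h)
  have v24 : i2.val ≠ i4.val := fun h => d24 (Fin.ext h)
  have v34 : i3.val ≠ i4.val := fun h => d34 (Fin.ext h)
  omega

/-- There is no decomposition of `ρ₀(θ,t)` with `n₁ = 3` and `n₂ = n₃ = n₄ = 2`;
consequently every such decomposition uses at least ten pure product states. -/
theorem rho0_no_nine_term_decomposition (t θ : ℝ) (ht : 0 < t)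
    (hθl : -(Real.pi / 3) < θ) (hθr : θ < Real.pi / 3) (hne : ¬(θ = 0 ∧ t = 1)) :
    (¬ ∃ (t1 : Fin 3 → ℝ) (β1 γ1 : Fin 3 → ℂ)
        (t2 : Fin 2 → ℝ) (β2 : Fin 2 → ℂ)
        (t3 : Fin 2 → ℝ) (β3 : Fin 2 → ℂ)
        (t4 : Fin 2 → ℝ) (β4 : Fin 2 → ℂ),
        (∀ i, 0 < t1 i) ∧ (∀ i, 0 < t2 i) ∧ (∀ i, 0 < t3 i) ∧ (∀ i, 0 < t4 i) ∧
        (∀ i, ‖β1 i‖ = 1) ∧ (∀ i, ‖γ1 i‖ = 1) ∧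
        (∀ i, ‖β2 i‖ = 1) ∧ (∀ i, ‖β3 i‖ = 1) ∧
        (∀ i, ‖β4 i‖ = 1) ∧
        rho0 θ t =
          ∑ i : Fin 3, (t1 i : ℂ) • rank1 (z1 1 (β1 i) (γ1 i))
          + ∑ i : Fin 2, ((t2 i : ℂ) / (t : ℂ) ^ 2) • rank1 (z2 t θ (β2 i))
          + ∑ i : Fin 2, ((t3 i : ℂ) / (t : ℂ) ^ 2) • rank1 (z3 t θ (β3 i))
          + ∑ i : Fin 2, ((t4 i : ℂ) / (t : ℂ) ^ 2) • rank1 (z4 t θ (β4 i))) ∧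
    (∀ (n₁ n₂ n₃ n₄ : ℕ)
        (t1 : Fin n₁ → ℝ) (β1 γ1 : Fin n₁ → ℂ)
        (t2 : Fin n₂ → ℝ) (β2 : Fin n₂ → ℂ)
        (t3 : Fin n₃ → ℝ) (β3 : Fin n₃ → ℂ)
        (t4 : Fin n₄ → ℝ) (β4 : Fin n₄ → ℂ),
        (∀ i, 0 < t1 i) → (∀ i, 0 < t2 i) → (∀ i, 0 < t3 i) → (∀ i, 0 < t4 i) →
        (∀ i, ‖β1 i‖ = 1) → (∀ i, ‖γ1 i‖ = 1) →
        (∀ i, ‖β2 i‖ = 1) → (∀ i, ‖β3 i‖ = 1) →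
        (∀ i, ‖β4 i‖ = 1) →
        rho0 θ t =
          ∑ i : Fin n₁, (t1 i : ℂ) • rank1 (z1 1 (β1 i) (γ1 i))
          + ∑ i : Fin n₂, ((t2 i : ℂ) / (t : ℂ) ^ 2) • rank1 (z2 t θ (β2 i))
          + ∑ i : Fin n₃, ((t3 i : ℂ) / (t : ℂ) ^ 2) • rank1 (z3 t θ (β3 i))
          + ∑ i : Fin n₄, ((t4 i : ℂ) / (t : ℂ) ^ 2) • rank1 (z4 t θ (β4 i)) →
        10 ≤ n₁ + n₂ + n₃ + n₄) := by
  
  constructor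
  · rintro ⟨t1, β1, γ1, t2, β2, t3, β3, t4, β4,
      hp1, hp2, hp3, hp4, hb1, hg1, hb2, hb3, hb4, hdec⟩
    have h10 := master t θ ht t1 β1 γ1 t2 β2 t3 β3 t4 β4
      hp1 hp2 hp3 hp4 hb1 hg1 hb2 hb3 hb4 hdec
    omega
  · intro n₁ n₂ n₃ n₄ t1 β1 γ1 t2 β2 t3 β3 t4 β4
      hp1 hp2 hp3 hp4 hb1 hg1 hb2 hb3 hb4 hdec
    exact master t θ ht t1 β1 γ1 t2 β2 t3 β3 t4 β4
      hp1 hp2 hp3 hp4 hb1 hg1 hb2 hb3 hb4 hdec
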